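/- Let μ > 0, b > 0, and let f : ℝ → ℝ be given on (0, ∞) by the inverse Gaussian density f(z) = √(b/(2π·z³)) · exp(−b·(z − μ)²/(2·μ²·z)). Then the function g(z) = f′(z)/f(z)² satisfies g(z) = √(π/(2·μ⁴·b·z)) · exp( b(z − μ)²/(2μ²z) ) · ( b(μ² − z²) − 3μ²z ) for all z > 0, its derivative is g′(z) = −√(π/(8·μ⁸·b·z⁵)) · exp( b(z−μ)²/(2μ²z) ) · ( 3μ⁴z² + b²(μ² − z²)² + b(6μ²z³ − 2μ⁴z) ), and g′(z) < 0 for every z > 0; in particular g is strictly decreasing on (0, ∞). -/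

import Mathlib

open Set

noncomputable def igE (μ b z : ℝ) : ℝ := b * (z - μ)^2 / (2 * μ^2 * z)
noncomputable def igQ (μ b z : ℝ) : ℝ := b * (μ^2 - z^2) - 3 * μ^2 * z
noncomputable def igF (μ b z : ℝ) : ℝ :=
  Real.sqrt (b/(2*Real.pi)) * ((Real.sqrt z)^3)⁻¹ * Real.exp (-(igE μ b z))
noncomputable def igG (μ b z : ℝ) : ℝ :=
  Real.sqrt (Real.pi/(2*μ^4*b)) * (Real.sqrt z)⁻¹ * Real.exp (igE μ b z) * igQ μ b z

lemma igE_hasDeriv (μ b : ℝ) (hμ : μ ≠ 0) {z : ℝ} (hz : 0 < z) :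
    HasDerivAt (igE μ b)
      ((b * (2 * (z - μ)) * (2*μ^2*z) - b*(z-μ)^2 * (2*μ^2)) / (2*μ^2*z)^2) z := by
  have h1 : HasDerivAt (fun w : ℝ => b * (w - μ)^2) (b * (2 * (z - μ))) z := by
    have h := (((hasDerivAt_id z).sub_const μ).pow 2).const_mul b
    convert h using 1
    · rfl
    · rfl
    · rfl
    simp only [id_eq]; push_cast; ring
  have h2 : HasDerivAt (fun w : ℝ => 2*μ^2*w) (2*μ^2) z := by
    simpa using (hasDerivAt_id z).const_mul (2*μ^2)
  have h := h1.div h2 (by positivity)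
  exact h

lemma igQ_hasDeriv (μ b : ℝ) (z : ℝ) :
    HasDerivAt (igQ μ b) (b * (-(2*z)) - 3*μ^2) z := by
  have h1 : HasDerivAt (fun w : ℝ => b * (μ^2 - w^2)) (b * (-(2*z))) z := by
    have h := (((hasDerivAt_pow 2 z)).const_sub (μ^2)).const_mul b
    convert h using 1
    · rfl
    · rfl
    push_cast; ring
  have h2 : HasDerivAt (fun w : ℝ => 3*μ^2*w) (3*μ^2) z := by
    simpa using (hasDerivAt_id z).const_mul (3*μ^2)
  exact h1.sub h2

lemma igP_pos (μ b z : ℝ) (hμ : 0 < μ) (hb : 0 < b) (hz : 0 < z) :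
    0 < 3*μ^4*z^2 + b^2*(μ^2-z^2)^2 + b*(6*μ^2*z^3 - 2*μ^4*z) := by
  rcases le_or_gt (μ^2) (3*z^2) with h | h
  · nlinarith [sq_nonneg (μ^2 - z^2), mul_pos (mul_pos hμ hμ) hz, mul_pos hb hz,
      mul_pos (mul_pos hb (mul_pos hμ hμ)) hz, sq_nonneg (b*(μ^2-z^2))]
  · have h3 : 3*z^4 < μ^4 := by nlinarith
    have hA : 0 < μ^2 - z^2 := by nlinarith
    nlinarith [sq_nonneg (b*(μ^2-z^2)^2 - μ^2*z*(μ^2 - 3*z^2)), mul_pos hA hA,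
      mul_pos (mul_pos (mul_pos hz hz) (mul_pos (mul_pos hμ hμ) (mul_pos hμ hμ)))
        (sub_pos.2 h3), hb.le, sq_nonneg (μ^2 - 3*z^2)]

lemma igG_hasDeriv (μ b : ℝ) (hμ : 0 < μ) (hb : 0 < b) {s : ℝ} (hs : 0 < s) :
    HasDerivAt (igG μ b)
      (-Real.sqrt (Real.pi/(8*μ^8*b*(s^2)^5)) * Real.exp (b*(s^2-μ)^2/(2*μ^2*s^2)) *
        (3*μ^4*(s^2)^2 + b^2*(μ^2-(s^2)^2)^2 + b*(6*μ^2*(s^2)^3 - 2*μ^4*(s^2)))) (s^2) := by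
  have hπ := Real.pi_pos
  have hz : (0:ℝ) < s^2 := by positivity
  have hsq : Real.sqrt (s^2) = s := Real.sqrt_sq hs.le
  have hi : HasDerivAt (fun w : ℝ => (Real.sqrt w)⁻¹)
      (-(1/(2*Real.sqrt (s^2)))/(Real.sqrt (s^2))^2) (s^2) :=
    (Real.hasDerivAt_sqrt hz.ne').inv (Real.sqrt_ne_zero'.2 hz)
  have he := (igE_hasDeriv μ b hμ.ne' hz).exp
  have hq := igQ_hasDeriv μ b (s^2)
  have htot := ((hi.const_mul (Real.sqrt (Real.pi/(2*μ^4*b)))).mul he).mul hq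
  have hGdef : igG μ b = fun w => Real.sqrt (Real.pi/(2*μ^4*b)) * (Real.sqrt w)⁻¹ *
      Real.exp (igE μ b w) * igQ μ b w := rfl
  rw [hGdef]
  convert htot using 1
  · rfl
  · rfl
  · rfl
  have hr : Real.sqrt (Real.pi/(8*μ^8*b*(s^2)^5))
      = Real.sqrt (Real.pi/(2*μ^4*b)) * (2*μ^2*s^5)⁻¹ := by
    rw [show Real.pi/(8*μ^8*b*(s^2)^5) = (Real.pi/(2*μ^4*b)) * ((2*μ^2*s^5)⁻¹)^2 by
        field_simp [hμ.ne', hb.ne', hs.ne', Real.pi_ne_zero]; ring,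
      Real.sqrt_mul (by positivity), Real.sqrt_sq (by positivity)]
  have hK : (0:ℝ) < Real.sqrt (Real.pi/(2*μ^4*b)) := Real.sqrt_pos.2 (by positivity)
  simp only [Pi.mul_apply]
  rw [hr, hsq, igE, igQ]
  field_simp [hμ.ne', hb.ne', hs.ne', Real.pi_ne_zero]
  ring

lemma igF_eq (μ b : ℝ) (hμ : 0 < μ) (hb : 0 < b) {w : ℝ} (hw : 0 < w) :
    Real.sqrt (b / (2 * Real.pi * w ^ 3)) *
      Real.exp (-b * (w - μ) ^ 2 / (2 * μ ^ 2 * w)) = igF μ b w := by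
  have hπ := Real.pi_pos
  obtain ⟨t, ht, rfl⟩ : ∃ t, 0 < t ∧ w = t^2 :=
    ⟨Real.sqrt w, Real.sqrt_pos.2 hw, (Real.sq_sqrt hw.le).symm⟩
  rw [igF, igE, Real.sqrt_sq ht.le,
    show b/(2*Real.pi*(t^2)^3) = (b/(2*Real.pi)) * ((t^3)⁻¹)^2 by
      field_simp [ht.ne', Real.pi_ne_zero],
    Real.sqrt_mul (by positivity), Real.sqrt_sq (by positivity),
    show -b * (t^2-μ)^2/(2*μ^2*t^2) = -(b*(t^2-μ)^2/(2*μ^2*t^2)) by ring]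

lemma igF_hasDeriv (μ b : ℝ) (hμ : 0 < μ) (hb : 0 < b) {s : ℝ} (hs : 0 < s) :
    HasDerivAt (igF μ b)
      (Real.sqrt (b/(2*Real.pi)) *
          (-(↑(3:ℕ) * Real.sqrt (s^2) ^ 2 * (1/(2*Real.sqrt (s^2)))) / ((Real.sqrt (s^2))^3)^2) *
          Real.exp (-igE μ b (s^2))
        + Real.sqrt (b/(2*Real.pi)) * ((Real.sqrt (s^2))^3)⁻¹ *
          (Real.exp (-igE μ b (s^2)) *
            -((b * (2 * (s^2 - μ)) * (2*μ^2*s^2) - b*(s^2-μ)^2 * (2*μ^2)) / (2*μ^2*s^2)^2))) (s^2) := by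
  have hz : (0:ℝ) < s^2 := by positivity
  have hp : HasDerivAt (fun w : ℝ => ((Real.sqrt w)^3)⁻¹)
      (-(↑(3:ℕ) * Real.sqrt (s^2) ^ 2 * (1/(2*Real.sqrt (s^2)))) / ((Real.sqrt (s^2))^3)^2) (s^2) :=
    ((Real.hasDerivAt_sqrt hz.ne').pow 3).inv (pow_ne_zero 3 (Real.sqrt_ne_zero'.2 hz))
  have he := ((igE_hasDeriv μ b hμ.ne' hz).neg).exp
  exact (hp.const_mul (Real.sqrt (b/(2*Real.pi)))).mul he

lemma ig_main1 (μ b : ℝ) (hμ : 0 < μ) (hb : 0 < b) (f : ℝ → ℝ)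
    (hf : ∀ z ∈ Ioi (0 : ℝ),
      f z = Real.sqrt (b / (2 * Real.pi * z ^ 3)) *
        Real.exp (-b * (z - μ) ^ 2 / (2 * μ ^ 2 * z))) :
    ∀ z ∈ Ioi (0 : ℝ), deriv f z / (f z) ^ 2 = igG μ b z := by
  have hπ := Real.pi_pos
  have hfF : EqOn f (igF μ b) (Ioi 0) := fun w hw => by
    rw [hf w hw, igF_eq μ b hμ hb (mem_Ioi.1 hw)]
  intro z hz
  obtain ⟨s, hs, rfl⟩ : ∃ s, 0 < s ∧ z = s^2 :=
    ⟨Real.sqrt z, Real.sqrt_pos.2 hz, (Real.sq_sqrt (le_of_lt hz)).symm⟩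
  have hz' : (0:ℝ) < s^2 := by positivity
  have hF := (igF_hasDeriv μ b hμ hb hs).congr_of_eventuallyEq
    (Filter.eventuallyEq_of_mem (isOpen_Ioi.mem_nhds hz') hfF)
  rw [hF.deriv, hfF hz']
  have hC : (0:ℝ) < Real.sqrt (b/(2*Real.pi)) := Real.sqrt_pos.2 (by positivity)
  have hCK : Real.sqrt (Real.pi/(2*μ^4*b)) * Real.sqrt (b/(2*Real.pi)) = 1/(2*μ^2) := by
    rw [← Real.sqrt_mul (by positivity),
      show Real.pi/(2*μ^4*b) * (b/(2*Real.pi)) = (1/(2*μ^2))^2 by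
        field_simp [hμ.ne', hb.ne', Real.pi_ne_zero]]
    exact Real.sqrt_sq (by positivity)
  have hK : Real.sqrt (Real.pi/(2*μ^4*b)) = (1/(2*μ^2)) / Real.sqrt (b/(2*Real.pi)) := by
    rw [eq_div_iff hC.ne']; exact hCK
  simp only [igG, igF, igE, igQ]
  rw [hK, Real.sqrt_sq hs.le, Real.exp_neg]
  set A := Real.exp (b * (s ^ 2 - μ) ^ 2 / (2 * μ ^ 2 * s ^ 2)) with hAdef
  set C := Real.sqrt (b/(2*Real.pi)) with hCdef
  have hA0 : A ≠ 0 := by rw [hAdef]; exact Real.exp_ne_zero _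
  have hC0 : C ≠ 0 := hC.ne'
  push_cast
  field_simp
  ring

/-- For the inverse Gaussian density `f(z) = √(b/(2πz³))·e^{−b(z−μ)²/(2μ²z)}` on
`(0,∞)`, the function `g = f'/f²` has the closed form
`g(z) = √(π/(2μ⁴bz))·e^{b(z−μ)²/(2μ²z)}·(b(μ² − z²) − 3μ²z)`, its derivative is
`g'(z) = −√(π/(8μ⁸bz⁵))·e^{b(z−μ)²/(2μ²z)}·(3μ⁴z² + b²(μ² − z²)² + b(6μ²z³ − 2μ⁴z)) < 0`,
and `g` is strictly decreasing on `(0, ∞)`. -/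
theorem inverse_gaussian_g_strict_anti
    (μ b : ℝ) (hμ : 0 < μ) (hb : 0 < b)
    (f : ℝ → ℝ)
    (hf : ∀ z ∈ Ioi (0 : ℝ),
      f z = Real.sqrt (b / (2 * Real.pi * z ^ 3)) *
        Real.exp (-b * (z - μ) ^ 2 / (2 * μ ^ 2 * z))) :
    (∀ z ∈ Ioi (0 : ℝ),
      deriv f z / (f z) ^ 2
        = Real.sqrt (Real.pi / (2 * μ ^ 4 * b * z)) *
            Real.exp (b * (z - μ) ^ 2 / (2 * μ ^ 2 * z)) *
            (b * (μ ^ 2 - z ^ 2) - 3 * μ ^ 2 * z) ∧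
      deriv (fun w => deriv f w / (f w) ^ 2) z
        = -Real.sqrt (Real.pi / (8 * μ ^ 8 * b * z ^ 5)) *
            Real.exp (b * (z - μ) ^ 2 / (2 * μ ^ 2 * z)) *
            (3 * μ ^ 4 * z ^ 2 + b ^ 2 * (μ ^ 2 - z ^ 2) ^ 2 +
              b * (6 * μ ^ 2 * z ^ 3 - 2 * μ ^ 4 * z)) ∧
      deriv (fun w => deriv f w / (f w) ^ 2) z < 0) ∧
    StrictAntiOn (fun z => deriv f z / (f z) ^ 2) (Ioi 0) := by
  have hπ := Real.pi_pos
  have main1 := ig_main1 μ b hμ hb f hf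
  constructor
  · intro z hz
    obtain ⟨s, hs, rfl⟩ : ∃ s, 0 < s ∧ z = s^2 :=
      ⟨Real.sqrt z, Real.sqrt_pos.2 hz, (Real.sq_sqrt (le_of_lt hz)).symm⟩
    have hz' : (0:ℝ) < s^2 := by positivity
    have heq : Real.sqrt (Real.pi / (2 * μ ^ 4 * b * s ^ 2)) *
        Real.exp (b * (s ^ 2 - μ) ^ 2 / (2 * μ ^ 2 * s ^ 2)) *
        (b * (μ ^ 2 - (s ^ 2) ^ 2) - 3 * μ ^ 2 * s ^ 2) = igG μ b (s^2) := by
      rw [igG, igE, igQ, Real.sqrt_sq hs.le,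
        show Real.pi/(2*μ^4*b*s^2) = (Real.pi/(2*μ^4*b)) * (s⁻¹)^2 by
          field_simp [hμ.ne', hb.ne', hs.ne', Real.pi_ne_zero],
        Real.sqrt_mul (by positivity), Real.sqrt_sq (by positivity)]
    have hEq2 : (fun w => deriv f w / f w ^ 2) =ᶠ[nhds (s^2)] igG μ b :=
      Filter.eventuallyEq_of_mem (isOpen_Ioi.mem_nhds hz') (fun w hw => main1 w hw)
    have hd2 : deriv (fun w => deriv f w / f w ^ 2) (s^2)
        = -Real.sqrt (Real.pi/(8*μ^8*b*(s^2)^5)) * Real.exp (b*(s^2-μ)^2/(2*μ^2*s^2)) *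
          (3*μ^4*(s^2)^2 + b^2*(μ^2-(s^2)^2)^2 + b*(6*μ^2*(s^2)^3 - 2*μ^4*(s^2))) := by
      rw [hEq2.deriv_eq, (igG_hasDeriv μ b hμ hb hs).deriv]
    have hP := igP_pos μ b (s^2) hμ hb hz'
    have h1 : 0 < Real.sqrt (Real.pi/(8*μ^8*b*(s^2)^5)) := Real.sqrt_pos.2 (by positivity)
    have h2 := Real.exp_pos (b*(s^2-μ)^2/(2*μ^2*s^2))
    refine ⟨by rw [main1 _ hz']; exact heq.symm, hd2, ?_⟩
    rw [hd2]
    nlinarith [mul_pos (mul_pos h1 h2) hP]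
  · have hGanti : StrictAntiOn (igG μ b) (Ioi 0) := by
      apply strictAntiOn_of_deriv_neg (convex_Ioi 0)
      · intro z hz
        obtain ⟨s, hs, rfl⟩ : ∃ s, 0 < s ∧ z = s^2 :=
          ⟨Real.sqrt z, Real.sqrt_pos.2 hz, (Real.sq_sqrt (le_of_lt hz)).symm⟩
        exact (igG_hasDeriv μ b hμ hb hs).continuousAt.continuousWithinAt
      · intro z hz
        rw [interior_Ioi] at hz
        obtain ⟨s, hs, rfl⟩ : ∃ s, 0 < s ∧ z = s^2 :=
          ⟨Real.sqrt z, Real.sqrt_pos.2 hz, (Real.sq_sqrt (le_of_lt hz)).symm⟩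
        rw [(igG_hasDeriv μ b hμ hb hs).deriv]
        have hP := igP_pos μ b (s^2) hμ hb (by positivity)
        have h1 : 0 < Real.sqrt (Real.pi/(8*μ^8*b*(s^2)^5)) := Real.sqrt_pos.2 (by positivity)
        have h2 := Real.exp_pos (b*(s^2-μ)^2/(2*μ^2*s^2))
        nlinarith [mul_pos (mul_pos h1 h2) hP]
    intro x hx y hy hxy
    simpa only [main1 x hx, main1 y hy] using hGanti hx hy hxy
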